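/- (Generalized Law of Cosines) Let x ∈ 𝐇, and let y, z ∈ ℝ³ satisfy z ∗ z = −1, y ∗ y = 1 or y ∗ y = −1, with neither y nor z a scalar multiple of x. Then z ∗ y + (z ∗ x)(x ∗ y) = ‖z ⊗ x‖ · ‖x ⊗ y‖ · cos α, where α is the angle at x, i.e., cos α = t_x(z) ∗ t_x(y). -/
import Mathlib


noncomputable section

/-- The Lorentzian inner product `u ∗ v = u₁v₁ + u₂v₂ − u₃v₃` on ℝ³. -/
def lor (u v : Fin 3 → ℝ) : ℝ := u 0 * v 0 + u 1 * v 1 - u 2 * v 2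

/-- The hyperboloid model of the hyperbolic plane. -/
def Hyp : Set (Fin 3 → ℝ) := {u | lor u u = -1 ∧ 0 < u 2}

/-- The Lorentzian cross product `u ⊗ v = J (u × v)`, `J = diag(1,1,−1)`. -/
def lcross (u v : Fin 3 → ℝ) : Fin 3 → ℝ :=
  ![u 1 * v 2 - u 2 * v 1, u 2 * v 0 - u 0 * v 2, -(u 0 * v 1 - u 1 * v 0)]

/-- Lorentzian magnitude `‖w‖ = √(w ∗ w)` (for `w` with `w ∗ w ≥ 0`). -/
def lnorm (w : Fin 3 → ℝ) : ℝ := Real.sqrt (lor w w)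

/-- The unit tangent vector at `p` toward `y`:
`t_p(y) = (y + (p ∗ y)p)/√(y ∗ y + (p ∗ y)²)`. -/
def tang (p y : Fin 3 → ℝ) : Fin 3 → ℝ :=
  (Real.sqrt (lor y y + lor p y ^ 2))⁻¹ • (y + lor p y • p)

/-- Inverse hyperbolic cosine. -/
def arcosh (x : ℝ) : ℝ := Real.log (x + Real.sqrt (x ^ 2 - 1))

/-- Hyperbolic distance between points of the hyperboloid: `d(p,q) = arccosh(−p ∗ q)`. -/
def dHyp (p q : Fin 3 → ℝ) : ℝ := arcosh (-lor p q)

lemma lor_symm (u v : Fin 3 → ℝ) : lor u v = lor v u := by simp [lor]; ring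

lemma lagrange (u v : Fin 3 → ℝ) :
    lor (lcross u v) (lcross u v) = lor u v ^ 2 - lor u u * lor v v := by
  simp [lor, lcross]; ring

lemma lor_lcross_left (u v : Fin 3 → ℝ) : lor u (lcross u v) = 0 := by
  simp [lor, lcross]; ring

lemma lor_smul_add (x u v : Fin 3 → ℝ) (r s c d : ℝ) :
    lor (r • (u + c • x)) (s • (v + d • x))
      = r * s * (lor u v + d * lor u x + c * lor x v + c * d * lor x x) := by
  simp [lor, Pi.smul_apply, Pi.add_apply, smul_eq_mul]; ring

lemma key (x w : Fin 3 → ℝ) (hx : lor x x = -1) (hw : w ≠ 0) (h : lor x w = 0) :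
    0 < lor w w := by
  simp only [lor] at *
  have hc : x 2 ^ 2 = x 0 ^ 2 + x 1 ^ 2 + 1 := by nlinarith
  have hc0 : x 2 ≠ 0 := by nlinarith [sq_nonneg (x 0), sq_nonneg (x 1)]
  have hpq : 0 < w 0 ^ 2 + w 1 ^ 2 := by
    rcases eq_or_ne (w 0) 0 with h0 | h0
    · rcases eq_or_ne (w 1) 0 with h1 | h1
      · exfalso; apply hw; funext i
        have : w 2 = 0 := by
          rw [h0, h1] at h
          have : x 2 * w 2 = 0 := by linarith
          exact (mul_eq_zero.1 this).resolve_left hc0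
        fin_cases i <;> simp [h0, h1, this]
      · positivity
    · positivity
  have hx2pos : (0:ℝ) < x 2 ^ 2 := by positivity
  have h2 : x 2 ^ 2 * w 2 ^ 2 = (x 0 * w 0 + x 1 * w 1) ^ 2 := by
    linear_combination (-(x 0 * w 0 + x 1 * w 1 + x 2 * w 2)) * h
  nlinarith [h2, sq_nonneg (x 0 * w 1 - x 1 * w 0), hpq, hx2pos, hc]

lemma lcross_ne (x v : Fin 3 → ℝ) (hc0 : x 2 ≠ 0) (hvx : ¬ ∃ t : ℝ, v = t • x) :
    lcross x v ≠ 0 := by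
  intro h
  apply hvx
  have h0 := congrFun h 0
  have h1 := congrFun h 1
  simp [lcross] at h0 h1
  refine ⟨v 2 / x 2, ?_⟩
  funext i
  fin_cases i <;> simp [Pi.smul_apply] <;> field_simp <;> nlinarith

/-- The Generalized Law of Cosines (Proposition 3.3):
`z ∗ y + (z ∗ x)(x ∗ y) = ‖z ⊗ x‖ ‖x ⊗ y‖ cos α`, where `cos α = t_x(z) ∗ t_x(y)`
is the cosine of the angle at `x`. -/
theorem generalized_law_of_cosines
    (x y z : Fin 3 → ℝ) (hx : x ∈ Hyp)
    (hz : lor z z = -1) (hy : lor y y = 1 ∨ lor y y = -1)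
    (hyx : ¬ ∃ t : ℝ, y = t • x) (hzx : ¬ ∃ t : ℝ, z = t • x) :
    lor z y + lor z x * lor x y
      = lnorm (lcross z x) * lnorm (lcross x y) * lor (tang x z) (tang x y) := by
  obtain ⟨hxx, hx2⟩ := hx
  have hAval : lor (lcross x z) (lcross x z) = lor z z + lor x z ^ 2 := by
    rw [lagrange, hxx, hz]; ring
  have hApos : 0 < lor z z + lor x z ^ 2 := by
    rw [← hAval]
    exact key x _ hxx (lcross_ne x z hx2.ne' hzx) (lor_lcross_left x z)
  have hBval : lor (lcross x y) (lcross x y) = lor y y + lor x y ^ 2 := by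
    rw [lagrange, hxx]; ring
  have hBpos : 0 < lor y y + lor x y ^ 2 := by
    rcases hy with h1 | h1
    · rw [h1]; positivity
    · rw [← hBval]
      exact key x _ hxx (lcross_ne x y hx2.ne' hyx) (lor_lcross_left x y)
  set A := lor z z + lor x z ^ 2 with hA
  set B := lor y y + lor x y ^ 2 with hB
  have hsA : (0:ℝ) < Real.sqrt A := Real.sqrt_pos.2 hApos
  have hsB : (0:ℝ) < Real.sqrt B := Real.sqrt_pos.2 hBpos
  have hn1 : lnorm (lcross z x) = Real.sqrt A := by
    unfold lnorm
    congr 1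
    rw [lagrange, lor_symm z x, hxx, hA]; linarith
  have hn2 : lnorm (lcross x y) = Real.sqrt B := by
    unfold lnorm; rw [hBval]
  have htang : lor (tang x z) (tang x y)
      = (Real.sqrt A)⁻¹ * (Real.sqrt B)⁻¹
        * (lor z y + lor x z * lor x y) := by
    unfold tang
    rw [lor_smul_add, hxx, lor_symm z x]
    ring
  rw [lor_symm z x, hn1, hn2, htang]
  field_simp
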